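/- For every real s > 0 and δ > 1/2, lim_{n→∞} (n+1) · Σ_{k ≥ ⌈((n+1)s)^{1/(2δ-1)}⌉} k^{-2δ} = 1/((2δ-1)·s). -/

import Mathlib

open Filter Real

-- per-step integral bounds
lemma step_bounds {p a : ℝ} (hp : 1 < p) (ha : 0 < a) :
    (a+1) ^ (-p) ≤ (a ^ (1-p) - (a+1) ^ (1-p)) / (p-1) ∧
    (a ^ (1-p) - (a+1) ^ (1-p)) / (p-1) ≤ a ^ (-p) := by
  have h0 : (0:ℝ) ∉ Set.uIcc a (a+1) := by
    rw [Set.uIcc_of_le (by linarith)]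
    rintro ⟨h1, h2⟩; linarith
  have key : (a ^ (1-p) - (a+1) ^ (1-p)) / (p-1) = ∫ t in a..(a+1), t ^ (-p) := by
    rw [integral_rpow (Or.inr ⟨by intro h; rw [neg_eq_iff_eq_neg] at h; linarith, h0⟩)]
    have e1 : -p + 1 = 1 - p := by ring
    rw [e1]
    have hp1 : p - 1 ≠ 0 := by linarith
    have hp2 : 1 - p ≠ 0 := by intro h; apply hp1; linarith
    field_simp
    ring
  have hcont : ContinuousOn (fun t : ℝ => t ^ (-p)) (Set.uIcc a (a+1)) := by
    apply ContinuousOn.rpow_const continuousOn_id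
    intro x hx
    exact Or.inl (fun h => h0 (h ▸ hx))
  have hint : IntervalIntegrable (fun t : ℝ => t ^ (-p)) MeasureTheory.volume a (a+1) :=
    hcont.intervalIntegrable
  constructor
  · rw [key]
    have := intervalIntegral.integral_mono_on (by linarith : a ≤ a + 1)
      (intervalIntegrable_const (c := (a+1) ^ (-p))) hint
      (fun x hx => Real.rpow_le_rpow_of_nonpos (by linarith [hx.1] : (0:ℝ) < x) hx.2
        (by linarith : -p ≤ 0))
    simpa using this
  · rw [key]
    have := intervalIntegral.integral_mono_on (by linarith : a ≤ a + 1) hint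
      (intervalIntegrable_const (c := a ^ (-p)))
      (fun x hx => Real.rpow_le_rpow_of_nonpos ha hx.1 (by linarith : -p ≤ 0))
    simpa using this

lemma summable_shift {p : ℝ} (hp : 1 < p) (N : ℕ) :
    Summable (fun i : ℕ => ((i + N : ℕ) : ℝ) ^ (-p)) := by
  have h : Summable (fun n : ℕ => (n : ℝ) ^ (-p)) :=
    Real.summable_nat_rpow.mpr (by linarith)
  exact (summable_nat_add_iff N).mpr h

-- telescoping partial sum bounds
lemma partial_bounds {p : ℝ} (hp : 1 < p) (N : ℕ) (hN : 1 ≤ N) (m : ℕ) :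
    (N:ℝ) ^ (1-p) / (p-1) - ((N+m : ℕ):ℝ) ^ (1-p) / (p-1)
      ≤ ∑ i ∈ Finset.range m, ((i + N : ℕ) : ℝ) ^ (-p) ∧
    ∑ i ∈ Finset.range m, ((i + N + 1 : ℕ) : ℝ) ^ (-p)
      ≤ (N:ℝ) ^ (1-p) / (p-1) - ((N+m : ℕ):ℝ) ^ (1-p) / (p-1) := by
  set G : ℕ → ℝ := fun k => (k:ℝ) ^ (1-p) / (p-1) with hG
  have tele : ∑ i ∈ Finset.range m, (G (N+i) - G (N+i+1)) = G N - G (N+m) :=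
    Finset.sum_range_sub' (fun i => G (N + i)) m
  have hstep : ∀ i : ℕ, ((i+N+1 : ℕ):ℝ) ^ (-p) ≤ G (N+i) - G (N+i+1) ∧
      G (N+i) - G (N+i+1) ≤ ((i+N : ℕ):ℝ) ^ (-p) := by
    intro i
    have ha : (0:ℝ) < ((N:ℝ) + i) := by
      have : (1:ℝ) ≤ (N:ℝ) := by exact_mod_cast hN
      positivity
    have h := step_bounds hp ha
    have e1 : ((i+N+1 : ℕ):ℝ) = (N:ℝ) + i + 1 := by push_cast; ring
    have e2 : ((i+N : ℕ):ℝ) = (N:ℝ) + i := by push_cast; ring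
    have e3 : ((N+i : ℕ):ℝ) = (N:ℝ) + i := by push_cast; ring
    have e4 : ((N+i+1 : ℕ):ℝ) = ((N:ℝ) + i) + 1 := by push_cast; ring
    constructor
    · rw [e1, hG]; simp only [e3, e4]; rw [← sub_div]; exact h.1
    · rw [e2, hG]; simp only [e3, e4]; rw [← sub_div]; exact h.2
  constructor
  · calc (N:ℝ) ^ (1-p) / (p-1) - ((N+m : ℕ):ℝ) ^ (1-p) / (p-1)
        = ∑ i ∈ Finset.range m, (G (N+i) - G (N+i+1)) := tele.symm
      _ ≤ ∑ i ∈ Finset.range m, ((i + N : ℕ) : ℝ) ^ (-p) :=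
          Finset.sum_le_sum (fun i _ => (hstep i).2)
  · calc ∑ i ∈ Finset.range m, ((i + N + 1 : ℕ) : ℝ) ^ (-p)
        ≤ ∑ i ∈ Finset.range m, (G (N+i) - G (N+i+1)) :=
          Finset.sum_le_sum (fun i _ => (hstep i).1)
      _ = (N:ℝ) ^ (1-p) / (p-1) - ((N+m : ℕ):ℝ) ^ (1-p) / (p-1) := tele

lemma tail_lb {p : ℝ} (hp : 1 < p) (N : ℕ) (hN : 1 ≤ N) :
    (N:ℝ) ^ (1-p) / (p-1) ≤ ∑' i : ℕ, ((i + N : ℕ) : ℝ) ^ (-p) := by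
  have hsum := summable_shift hp N
  have hmono : ∀ m : ℕ, (N:ℝ) ^ (1-p) / (p-1) - ((N+m : ℕ):ℝ) ^ (1-p) / (p-1)
      ≤ ∑' i : ℕ, ((i + N : ℕ) : ℝ) ^ (-p) := by
    intro m
    refine le_trans (partial_bounds hp N hN m).1 ?_
    exact Summable.sum_le_tsum _ (fun i _ => rpow_nonneg (Nat.cast_nonneg _) _) hsum
  have hlim : Tendsto (fun m : ℕ => (N:ℝ) ^ (1-p) / (p-1) - ((N+m : ℕ):ℝ) ^ (1-p) / (p-1))
      atTop (nhds ((N:ℝ) ^ (1-p) / (p-1))) := by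
    have h1 : Tendsto (fun m : ℕ => ((N+m : ℕ):ℝ)) atTop atTop :=
      tendsto_natCast_atTop_atTop.comp
        (by simpa [Nat.add_comm] using tendsto_add_atTop_nat N)
    have h2 : Tendsto (fun m : ℕ => ((N+m : ℕ):ℝ) ^ (1-p)) atTop (nhds 0) := by
      have := (tendsto_rpow_neg_atTop (by linarith : (0:ℝ) < p - 1)).comp h1
      simpa [neg_sub, Function.comp_def] using this
    have h3 := (h2.div_const (p-1)).const_sub ((N:ℝ) ^ (1-p) / (p-1))
    simpa using h3
  exact le_of_tendsto hlim (Eventually.of_forall hmono)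

lemma tail_ub {p : ℝ} (hp : 1 < p) (N : ℕ) (hN : 1 ≤ N) :
    ∑' i : ℕ, ((i + N : ℕ) : ℝ) ^ (-p) ≤ (N:ℝ) ^ (1-p) / (p-1) + (N:ℝ) ^ (-p) := by
  have hsum := summable_shift hp N
  have hsplit := (Summable.sum_add_tsum_nat_add (f := fun i : ℕ => ((i + N : ℕ) : ℝ) ^ (-p)) 1 hsum).symm
  rw [hsplit]
  have h0 : ∑ i ∈ Finset.range 1, ((i + N : ℕ) : ℝ) ^ (-p) = (N:ℝ) ^ (-p) := by simp
  rw [h0, add_comm ((N:ℝ) ^ (1-p) / (p-1))]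
  gcongr
  apply Real.tsum_le_of_sum_range_le (fun i => rpow_nonneg (Nat.cast_nonneg _) _)
  intro m
  have h := (partial_bounds hp N hN m).2
  have hnn : 0 ≤ ((N+m : ℕ):ℝ) ^ (1-p) / (p-1) :=
    div_nonneg (rpow_nonneg (Nat.cast_nonneg _) _) (by linarith)
  calc ∑ i ∈ Finset.range m, ((i + 1 + N : ℕ) : ℝ) ^ (-p)
      = ∑ i ∈ Finset.range m, ((i + N + 1 : ℕ) : ℝ) ^ (-p) := by
        apply Finset.sum_congr rfl; intro i _; congr 2; omega
    _ ≤ (N:ℝ) ^ (1-p) / (p-1) - ((N+m : ℕ):ℝ) ^ (1-p) / (p-1) := h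
    _ ≤ (N:ℝ) ^ (1-p) / (p-1) := by linarith

def natAddEquiv (N : ℕ) : ℕ ≃ {k : ℕ // N ≤ k} where
  toFun i := ⟨i + N, Nat.le_add_left N i⟩
  invFun k := k.1 - N
  left_inv i := by simp
  right_inv k := by
    rcases k with ⟨k, hk⟩
    simp [Nat.sub_add_cancel hk]

lemma tsum_subtype_eq (f : ℕ → ℝ) (N : ℕ) :
    ∑' k : {k : ℕ // N ≤ k}, f k = ∑' i : ℕ, f (i + N) :=
  ((natAddEquiv N).tsum_eq (fun k : {k : ℕ // N ≤ k} => f k)).symm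

theorem tail_sum_asymptotics (s δ : ℝ) (hs : 0 < s) (hδ : 1 / 2 < δ) :
    Tendsto (fun n : ℕ =>
        ((n : ℝ) + 1) *
          ∑' k : {k : ℕ // ⌈(((n : ℝ) + 1) * s) ^ (1 / (2 * δ - 1))⌉₊ ≤ k},
            ((k : ℕ) : ℝ) ^ (-(2 * δ)))
      atTop (nhds (1 / ((2 * δ - 1) * s))) := by
  set p : ℝ := 2 * δ with hpdef
  have hp : 1 < p := by simp only [hpdef]; linarith
  have hp1 : (0:ℝ) < p - 1 := by linarith
  set x : ℕ → ℝ := fun n => (((n : ℝ) + 1) * s) ^ (1 / (p - 1)) with hx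
  have hbase : ∀ n : ℕ, (0:ℝ) < ((n : ℝ) + 1) * s := by
    intro n; positivity
  have hxpos : ∀ n, 0 < x n := fun n => rpow_pos_of_pos (hbase n) _
  set N : ℕ → ℕ := fun n => ⌈x n⌉₊ with hNdef
  have hN1 : ∀ n, 1 ≤ N n := fun n => Nat.one_le_ceil_iff.mpr (hxpos n)
  have hNge : ∀ n, x n ≤ (N n : ℝ) := fun n => Nat.le_ceil _
  have hNle : ∀ n, (N n : ℝ) ≤ x n + 1 := fun n => (Nat.ceil_lt_add_one (hxpos n).le).le
  have hNpos : ∀ n, (0:ℝ) < (N n : ℝ) := fun n => lt_of_lt_of_le (hxpos n) (hNge n)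
  -- key: x n ^ (1-p) = ((n+1)s)⁻¹
  have hxkey : ∀ n : ℕ, x n ^ (1 - p) = (((n : ℝ) + 1) * s)⁻¹ := by
    intro n
    rw [hx, ← Real.rpow_mul (hbase n).le]
    have h : 1 / (p - 1) * (1 - p) = -1 := by field_simp; ring
    rw [h, Real.rpow_neg_one]
  -- x n → ∞
  have hxtop : Tendsto x atTop atTop := by
    apply (tendsto_rpow_atTop (by positivity : (0:ℝ) < 1 / (p-1))).comp
    apply Tendsto.atTop_mul_const hs
    exact tendsto_atTop_add_const_right _ 1 tendsto_natCast_atTop_atTop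
  have hinv : Tendsto (fun n => (x n)⁻¹) atTop (nhds 0) := hxtop.inv_tendsto_atTop
  -- bounds on the full expression
  set F : ℕ → ℝ := fun n => ((n : ℝ) + 1) * ∑' i : ℕ, ((i + N n : ℕ) : ℝ) ^ (-p) with hF
  set Low : ℕ → ℝ := fun n => ((n : ℝ) + 1) * ((x n + 1) ^ (1-p) / (p-1)) with hLow
  set High : ℕ → ℝ := fun n =>
    ((n : ℝ) + 1) * ((x n) ^ (1-p) / (p-1) + (x n) ^ (-p)) with hHigh
  have hlb : ∀ n, Low n ≤ F n := by
    intro n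
    apply mul_le_mul_of_nonneg_left _ (by positivity : (0:ℝ) ≤ (n:ℝ)+1)
    refine le_trans ?_ (tail_lb hp (N n) (hN1 n))
    have h1 : (x n + 1) ^ (1-p) ≤ (N n : ℝ) ^ (1-p) :=
      Real.rpow_le_rpow_of_nonpos (hNpos n) (hNle n) (by linarith)
    exact (div_le_div_iff_of_pos_right hp1).mpr h1
  have hub : ∀ n, F n ≤ High n := by
    intro n
    apply mul_le_mul_of_nonneg_left _ (by positivity : (0:ℝ) ≤ (n:ℝ)+1)
    refine le_trans (tail_ub hp (N n) (hN1 n)) ?_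
    have h1 : (N n : ℝ) ^ (1-p) ≤ (x n) ^ (1-p) :=
      Real.rpow_le_rpow_of_nonpos (hxpos n) (hNge n) (by linarith)
    have h2 : (N n : ℝ) ^ (-p) ≤ (x n) ^ (-p) :=
      Real.rpow_le_rpow_of_nonpos (hxpos n) (hNge n) (by linarith)
    have h3 := (div_le_div_iff_of_pos_right hp1).mpr h1
    linarith
  -- limit of Low
  have hLowlim : Tendsto Low atTop (nhds (1 / ((p - 1) * s))) := by
    have heq : ∀ n, Low n = (((n:ℝ)+1) * (x n) ^ (1-p)) * ((1 + (x n)⁻¹) ^ (1-p)) / (p-1) := by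
      intro n
      have hxn := hxpos n
      have hprod : (x n + 1) ^ (1-p) = (x n) ^ (1-p) * (1 + (x n)⁻¹) ^ (1-p) := by
        rw [← Real.mul_rpow hxn.le (by positivity)]
        congr 1
        field_simp
      simp only [hLow, hprod]
      ring
    have heq2 : ∀ n, Low n = (((n:ℝ)+1) * (((n : ℝ) + 1) * s)⁻¹) * ((1 + (x n)⁻¹) ^ (1-p)) / (p-1) := by
      intro n; rw [heq n, hxkey n]
    have heq3 : ∀ n, Low n = (1/s) * ((1 + (x n)⁻¹) ^ (1-p)) / (p-1) := by
      intro n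
      rw [heq2 n]
      have : ((n:ℝ)+1) * (((n : ℝ) + 1) * s)⁻¹ = 1/s := by
        rw [mul_inv]
        have h1 : ((n:ℝ)+1) ≠ 0 := by positivity
        field_simp
      rw [this]
    have hlim1 : Tendsto (fun n => (1 + (x n)⁻¹) ^ (1-p)) atTop (nhds 1) := by
      have h1 : Tendsto (fun n => 1 + (x n)⁻¹) atTop (nhds 1) := by
        simpa using (tendsto_const_nhds (x := (1:ℝ))).add hinv
      have h2 : Tendsto (fun n => (1 + (x n)⁻¹) ^ (1-p)) atTop (nhds ((1:ℝ) ^ (1-p))) :=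
        (Real.continuousAt_rpow_const 1 (1-p) (Or.inl one_ne_zero)).tendsto.comp h1
      simpa using h2
    have := ((hlim1.const_mul (1/s)).div_const (p-1))
    rw [show (1:ℝ)/s * 1 / (p-1) = 1 / ((p-1)*s) by field_simp] at this
    exact Tendsto.congr (fun n => (heq3 n).symm) this
  -- limit of High
  have hHighlim : Tendsto High atTop (nhds (1 / ((p - 1) * s))) := by
    have heq : ∀ n, High n = 1 / ((p-1)*s) + (1/s) * (x n)⁻¹ := by
      intro n
      have hxn := hxpos n
      have h2 : ((n:ℝ)+1) * (x n) ^ (-p) = (1/s) * (x n)⁻¹ := by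
        have hxp : (x n) ^ (-p) = (x n) ^ (1-p) * (x n)⁻¹ := by
          rw [← Real.rpow_neg_one (x n), ← Real.rpow_add hxn]
          congr 1; ring
        rw [hxp, hxkey n, mul_inv]
        have h1 : ((n:ℝ)+1) ≠ 0 := by positivity
        field_simp
      have h3 : ((n:ℝ)+1) * ((x n) ^ (1-p) / (p-1)) = 1 / ((p-1)*s) := by
        rw [hxkey n, mul_inv]
        have h1 : ((n:ℝ)+1) ≠ 0 := by positivity
        field_simp
      simp only [hHigh]
      rw [mul_add, h2, h3]
    have hl : Tendsto (fun n => 1 / ((p-1)*s) + (1/s) * (x n)⁻¹) atTop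
        (nhds (1 / ((p-1)*s))) := by
      have := (hinv.const_mul (1/s)).const_add (1 / ((p-1)*s))
      simpa using this
    exact Tendsto.congr (fun n => (heq n).symm) hl
  -- combine
  have hFlim : Tendsto F atTop (nhds (1 / ((p - 1) * s))) :=
    tendsto_of_tendsto_of_tendsto_of_le_of_le hLowlim hHighlim hlb hub
  have hrw : ∀ n : ℕ, ((n : ℝ) + 1) *
      (∑' k : {k : ℕ // ⌈(((n : ℝ) + 1) * s) ^ (1 / (2 * δ - 1))⌉₊ ≤ k},
        ((k : ℕ) : ℝ) ^ (-(2 * δ))) = F n := by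
    intro n
    have : (∑' k : {k : ℕ // N n ≤ k}, ((k : ℕ) : ℝ) ^ (-p))
        = ∑' i : ℕ, ((i + N n : ℕ) : ℝ) ^ (-p) :=
      tsum_subtype_eq (fun k : ℕ => ((k : ℕ) : ℝ) ^ (-p)) (N n)
    simp only [hF, hNdef, hx, hpdef] at this ⊢
    rw [this]
  have hfinal : (1 : ℝ) / ((2 * δ - 1) * s) = 1 / ((p - 1) * s) := by
    rw [hpdef]
  rw [hfinal]
  exact Tendsto.congr (fun n => (hrw n).symm) hFlim
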